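/- Let L be a finite join-semidistributive lattice and Θ a lattice congruence on L. If x ∈ L is not contracted by Θ, then the canonical join representation of x computed in the quotient L/Θ (realized as the subposet of elements not contracted by Θ) coincides with the canonical join representation of x in L. In particular, the join-irreducible elements of L/Θ are exactly the join-irreducible elements of L not contracted by Θ. -/

import Mathlib

/-- An equivalence relation is a lattice congruence if it is compatible
with meets and joins. -/
def IsLatCong {L : Type*} [Lattice L] (r : Setoid L) : Prop :=
  ∀ x1 x2 y1 y2 : L, r.r x1 x2 → r.r y1 y2 →
    r.r (x1 ⊓ y1) (x2 ⊓ y2) ∧ r.r (x1 ⊔ y1) (x2 ⊔ y2)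

/-- `x` is the least upper bound of `X` within the subposet `S`. -/
def IsLUBIn {L : Type*} [Lattice L] (S : Set L) (X : Set L) (x : L) : Prop :=
  x ∈ S ∧ (∀ a ∈ X, a ≤ x) ∧ ∀ b ∈ S, (∀ a ∈ X, a ≤ b) → x ≤ b

/-- `X` is the canonical join representation of `x` within the subposet `S`. -/
def IsCJRIn {L : Type*} [Lattice L] (S : Set L) (x : L) (X : Set L) : Prop :=
  X ⊆ S ∧ IsAntichain (· ≤ ·) X ∧ IsLUBIn S X x ∧
    ∀ Y ⊆ S, IsLUBIn S Y x → ∀ a ∈ X, ∃ b ∈ Y, a ≤ b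

/-- `x` is contracted by the congruence `r` if it is congruent to a strictly
smaller element. -/
def Contracted {L : Type*} [Lattice L] (r : Setoid L) (x : L) : Prop :=
  ∃ y : L, y < x ∧ r.r x y

/-- `m` is covered by `j` within the subposet `S`. -/
def CoversIn {L : Type*} [Lattice L] (S : Set L) (m j : L) : Prop :=
  m ∈ S ∧ j ∈ S ∧ m < j ∧ ∀ z ∈ S, m < z → z < j → False

/-- `j` is join-irreducible within the subposet `S`: it covers exactly one
element of `S`. -/
def JoinIrredIn {L : Type*} [Lattice L] (S : Set L) (j : L) : Prop :=
  j ∈ S ∧ ∃! m : L, CoversIn S m j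


section Aux

variable {L : Type*} [Lattice L] [Fintype L] (r : Setoid L)

open Classical in
/-- The minimum of the congruence class of `x`. -/
noncomputable def piC (x : L) : L :=
  (Finset.univ.filter (fun y => r.r x y)).inf'
    ⟨x, Finset.mem_filter.mpr ⟨Finset.mem_univ x, r.iseqv.refl x⟩⟩ id

theorem piC_le_of {x y : L} (h : r.r x y) : piC r x ≤ y := by
  classical
  exact Finset.inf'_le _ (Finset.mem_filter.mpr ⟨Finset.mem_univ y, h⟩)

theorem piC_le (x : L) : piC r x ≤ x := piC_le_of r (r.iseqv.refl x)

theorem r_inf' (hr : IsLatCong r) (x : L) (s : Finset L) (hs : s.Nonempty)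
    (hall : ∀ y ∈ s, r.r x y) : r.r x (s.inf' hs id) := by
  induction s using Finset.cons_induction with
  | empty => exact absurd hs (by simp)
  | cons a t ha ih =>
    rcases t.eq_empty_or_nonempty with rfl | ht
    · simpa using hall a (by simp)
    · rw [Finset.inf'_cons ht]
      have h1 := hall a (Finset.mem_cons_self a t)
      have h2 := ih ht (fun y hy => hall y (Finset.mem_cons.mpr (Or.inr hy)))
      have h3 := (hr x a x _ h1 h2).1
      simpa using h3

theorem r_piC (hr : IsLatCong r) (x : L) : r.r x (piC r x) := by
  classical
  exact r_inf' r hr x _ _ (fun y hy => (Finset.mem_filter.mp hy).2)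

theorem piC_mono (hr : IsLatCong r) {x y : L} (h : x ≤ y) : piC r x ≤ piC r y := by
  have hx := r_piC r hr x
  have hy := r_piC r hr y
  have h1 := (hr x (piC r x) y (piC r y) hx hy).1
  rw [inf_eq_left.mpr h] at h1
  exact le_trans (piC_le_of r h1) inf_le_right

theorem piC_piC (hr : IsLatCong r) (x : L) : piC r (piC r x) = piC r x := by
  refine le_antisymm (piC_le r _) (piC_le_of r ?_)
  exact r.iseqv.trans (r_piC r hr x) (r_piC r hr (piC r x))

theorem uncontracted_iff (hr : IsLatCong r) (x : L) :
    ¬ Contracted r x ↔ piC r x = x := by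
  constructor
  · intro h
    by_contra hne
    exact h ⟨piC r x, lt_of_le_of_ne (piC_le r x) hne, r_piC r hr x⟩
  · rintro hfix ⟨y, hlt, hxy⟩
    have : x ≤ y := hfix ▸ piC_le_of r hxy
    exact hlt.not_ge this

theorem piC_uncontracted (hr : IsLatCong r) (x : L) : ¬ Contracted r (piC r x) :=
  (uncontracted_iff r hr _).mpr (piC_piC r hr x)

/-- Part 1: lifting the canonical join representation to the quotient subposet. -/
theorem cjr_lift (hr : IsLatCong r) {x : L} (hx : ¬ Contracted r x)
    {X : Set L} (hX : IsCJRIn Set.univ x X) :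
    IsCJRIn {y : L | ¬ Contracted r y} x X := by
  obtain ⟨-, hanti, ⟨-, hub, hlub⟩, hmin⟩ := hX
  have hxfix := (uncontracted_iff r hr x).mp hx
  have hXS : X ⊆ {y : L | ¬ Contracted r y} := by
    intro a ha
    simp only [Set.mem_setOf_eq]
    intro hca
    have hpa : piC r a < a :=
      lt_of_le_of_ne (piC_le r a) (fun h => ((uncontracted_iff r hr a).mpr h) hca)
    have hYlub : IsLUBIn Set.univ (insert (piC r a) (X \ {a})) x := by
      refine ⟨trivial, ?_, ?_⟩
      · rintro c hc
        rcases Set.mem_insert_iff.mp hc with rfl | ⟨hc1, -⟩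
        · exact le_trans (piC_le r a) (hub a ha)
        · exact hub c hc1
      · rintro b - hb
        have hba : ∀ c ∈ X, c ≤ b ⊔ a := by
          intro c hc
          by_cases h : c = a
          · exact h ▸ le_sup_right
          · exact le_sup_left.trans' (hb c (Set.mem_insert_iff.mpr (Or.inr ⟨hc, h⟩)))
        have hxba : x ≤ b ⊔ a := hlub _ trivial hba
        have hcong : r.r (b ⊔ a) b := by
          have h4 := (hr b b a (piC r a) (r.iseqv.refl b) (r_piC r hr a)).2
          rwa [sup_eq_left.mpr (hb _ (Set.mem_insert _ _))] at h4
        calc x = piC r x := hxfix.symm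
          _ ≤ piC r (b ⊔ a) := piC_mono r hr hxba
          _ ≤ b := piC_le_of r hcong
    obtain ⟨b, hbY, hab⟩ := hmin _ (Set.subset_univ _) hYlub a ha
    rcases Set.mem_insert_iff.mp hbY with rfl | ⟨hbX, hba⟩
    · exact hpa.not_ge hab
    · exact hanti ha hbX (Ne.symm hba) hab
  refine ⟨hXS, hanti, ⟨hx, hub, fun b _ hb => hlub b trivial hb⟩, ?_⟩
  rintro Y hYS ⟨-, hYub, hYlub⟩ a ha
  refine hmin Y (Set.subset_univ Y) ⟨trivial, hYub, ?_⟩ a ha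
  rintro b - hb
  have hall : ∀ y ∈ Y, y ≤ piC r (b ⊓ x) := by
    intro y hy
    have hyfix := (uncontracted_iff r hr y).mp (hYS hy)
    calc y = piC r y := hyfix.symm
      _ ≤ piC r (b ⊓ x) := piC_mono r hr (le_inf (hb y hy) (hYub y hy))
  have h5 := hYlub _ (piC_uncontracted r hr (b ⊓ x)) hall
  exact h5.trans ((piC_le r _).trans inf_le_left)

/-- In a finite lattice, above any element strictly below `j` (within `S`) there is
an `S`-cover of `j`. -/
theorem exists_cover {S : Set L} {m j : L} (hm : m ∈ S) (hj : j ∈ S) (h : m < j) :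
    ∃ w, m ≤ w ∧ CoversIn S w j := by
  classical
  obtain ⟨w, hw, hmax⟩ := Finset.exists_maximal (s :=
    (Finset.univ.filter (fun w => w ∈ S ∧ m ≤ w ∧ w < j))) ⟨m, by simp [hm, h]⟩
  simp only [Finset.mem_filter, Finset.mem_univ, true_and] at hw
  refine ⟨w, hw.2.1, hw.1, hj, hw.2.2, ?_⟩
  intro z hz hwz hzj
  exact hwz.not_ge (hmax (by simp [hz, (hw.2.1.trans hwz.le), hzj]) hwz.le)

end Aux

/-- In a finite join-semidistributive lattice, if `x` is not contracted by a congruence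
`r`, then the canonical join representation of `x` computed in the quotient (realized as
the subposet of uncontracted elements) coincides with its canonical join representation
in `L`; moreover the join-irreducible elements of the quotient are exactly the
join-irreducible elements of `L` not contracted by `r`. -/
theorem stmt3 {L : Type*} [Lattice L] [Fintype L] (r : Setoid L) (hr : IsLatCong r)
    (hjsd : ∀ z : L, ∃ Z : Set L, IsCJRIn Set.univ z Z)
    (x : L) (hx : ¬ Contracted r x) (X : Set L) (hX : IsCJRIn Set.univ x X) :
    IsCJRIn {y : L | ¬ Contracted r y} x X ∧
      ∀ j : L, JoinIrredIn {y : L | ¬ Contracted r y} j ↔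
        (JoinIrredIn Set.univ j ∧ ¬ Contracted r j) := by
  have hmain := cjr_lift r hr hx hX
  refine ⟨hmain, ?_⟩
  intro j
  constructor
  · rintro ⟨hjS, m, hmcov, hmuniq⟩
    have hjS' : ¬ Contracted r j := hjS
    refine ⟨⟨trivial, ?_⟩, hjS'⟩
    have key : ∀ w1 w2 : L, CoversIn Set.univ w1 j → CoversIn Set.univ w2 j → w1 = w2 := by
      intro w1 w2 h1 h2
      by_contra hne
      have hj12 : j = w1 ⊔ w2 := by
        have hlt : w1 < w1 ⊔ w2 := by
          refine lt_of_le_of_ne le_sup_left (fun h => ?_)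
          have h21 : w2 ≤ w1 := by rw [h]; exact le_sup_right
          have h21' : w2 < w1 := lt_of_le_of_ne h21 (Ne.symm hne)
          exact h2.2.2.2 w1 trivial h21' h1.2.2.1
        have hle : w1 ⊔ w2 ≤ j := sup_le h1.2.2.1.le h2.2.2.1.le
        rcases eq_or_lt_of_le hle with h | h
        · exact h.symm
        · exact absurd (h1.2.2.2 _ trivial hlt h) id
      obtain ⟨Z, hZ⟩ := hjsd j
      have hZS := cjr_lift r hr hjS' hZ
      have hjZ : j ∈ Z := by
        by_contra hjZ
        have hall : ∀ y ∈ Z, y ≤ m := by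
          intro y hy
          have hylt : y < j :=
            lt_of_le_of_ne (hZS.2.2.1.2.1 y hy) (fun h => hjZ (h ▸ hy))
          obtain ⟨w, hyw, hwcov⟩ := exists_cover (hZS.1 hy) hjS hylt
          exact hyw.trans (hmuniq w hwcov).le
        exact hmcov.2.2.1.not_ge (hZS.2.2.1.2.2 m hmcov.1 hall)
      have hY12 : IsLUBIn Set.univ {w1, w2} j := by
        refine ⟨trivial, ?_, ?_⟩
        · rintro c hc
          rcases hc with rfl | rfl
          · exact h1.2.2.1.le
          · exact h2.2.2.1.le
        · rintro b - hb
          rw [hj12]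
          exact sup_le (hb w1 (Or.inl rfl)) (hb w2 (Or.inr rfl))
      obtain ⟨b, hb, hjb⟩ := hZ.2.2.2 {w1, w2} (Set.subset_univ _) hY12 j hjZ
      rcases hb with rfl | rfl
      · exact h1.2.2.1.not_ge hjb
      · exact h2.2.2.1.not_ge hjb
    obtain ⟨w, -, hwcov⟩ :=
      exists_cover (S := Set.univ) (m := m) trivial trivial hmcov.2.2.1
    exact ⟨w, hwcov, fun w' h' => key w' w h' hwcov⟩
  · rintro ⟨⟨-, m, hmcov, hmuniq⟩, hjS⟩
    refine ⟨hjS, piC r m, ⟨piC_uncontracted r hr m, hjS,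
      lt_of_le_of_lt (piC_le r m) hmcov.2.2.1, ?_⟩, ?_⟩
    · intro z hzS hz1 hz2
      obtain ⟨w, hzw, hwcov⟩ :=
        exists_cover (S := Set.univ) (m := z) trivial trivial hz2
      have hzm : z ≤ m := hzw.trans (hmuniq w hwcov).le
      have : z ≤ piC r m := by
        have hzfix := (uncontracted_iff r hr z).mp hzS
        calc z = piC r z := hzfix.symm
          _ ≤ piC r m := piC_mono r hr hzm
      exact hz1.not_ge this
    · intro m' hm'cov
      obtain ⟨w, hm'w, hwcov⟩ :=
        exists_cover (S := Set.univ) (m := m') trivial trivial hm'cov.2.2.1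
      have hm'm : m' ≤ m := hm'w.trans (hmuniq w hwcov).le
      have hle : m' ≤ piC r m := by
        have hfix := (uncontracted_iff r hr m').mp hm'cov.1
        calc m' = piC r m' := hfix.symm
          _ ≤ piC r m := piC_mono r hr hm'm
      rcases eq_or_lt_of_le hle with h | h
      · exact h
      · exact absurd (hm'cov.2.2.2 (piC r m) (piC_uncontracted r hr m) h
          (lt_of_le_of_lt (piC_le r m) hmcov.2.2.1)) id
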